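/- Let T be a contraction on a complex Hilbert space H and let P be the asymptotic limit of T*. Then for every h ∈ H the series Σ_{k=0}^∞ ‖D_{T*} T*ᵏ h‖² converges and Σ_{k=0}^∞ ‖D_{T*} T*ᵏ h‖² = ‖h‖² − ‖Ph‖². Consequently, the map E_D : H → ℓ²(ℕ, 𝒟_{T*}) ⊕ H defined by E_D h := ((D_{T*} T*ᵏ h)_{k≥0}, Ph) is a well-defined linear isometry. -/

import Mathlib

noncomputable section

open scoped ENNReal

namespace GammaModel

variable {E : Type*} [NormedAddCommGroup E] [NormedSpace ℂ E]

/-- The `E`-valued Hardy space `H²_E(𝔻)`, identified with `ℓ²(ℕ, E)`. -/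
abbrev L2 (E : Type*) [NormedAddCommGroup E] [NormedSpace ℂ E] : Type _ :=
  lp (fun _ : ℕ => E) 2

/-- The underlying function of the unilateral shift. -/
def shiftFun (f : ℕ → E) : ℕ → E
  | 0 => 0
  | (k + 1) => f k

lemma rpow_toReal_two (x : ℝ) : x ^ ((2 : ℝ≥0∞)).toReal = x ^ (2 : ℕ) := by
  rw [show ((2 : ℝ≥0∞)).toReal = ((2 : ℕ) : ℝ) by norm_num, Real.rpow_natCast]

lemma summable_sq_of_mem (f : L2 E) :
    Summable (fun k => ‖(f : ∀ _ : ℕ, E) k‖ ^ (2 : ℕ)) := by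
  have h := lp.memℓp f
  rw [memℓp_gen_iff (by norm_num)] at h
  simpa [rpow_toReal_two] using h

lemma memℓp_shiftFun (f : L2 E) : Memℓp (shiftFun (f : ∀ _ : ℕ, E)) 2 := by
  rw [memℓp_gen_iff (by norm_num)]
  apply (summable_nat_add_iff 1).mp
  simpa [shiftFun, rpow_toReal_two] using summable_sq_of_mem f

/-- The unilateral shift as a linear map on `ℓ²(ℕ, E)`. -/
def shiftLM : L2 E →ₗ[ℂ] L2 E where
  toFun f := ⟨shiftFun (f : ∀ _ : ℕ, E), memℓp_shiftFun f⟩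
  map_add' f g := by
    ext k
    cases k <;> simp [shiftFun, lp.coeFn_add, Pi.add_apply] <;> first | rfl | exact (add_zero _).symm
  map_smul' c f := by
    ext k
    cases k <;> simp [shiftFun, lp.coeFn_smul, Pi.smul_apply]

lemma norm_shiftLM (f : L2 E) : ‖shiftLM f‖ = ‖f‖ := by
  have h2 : (0:ℝ) < ((2 : ℝ≥0∞)).toReal := by norm_num
  have hs := lp.norm_rpow_eq_tsum h2 (shiftLM f)
  have hf := lp.norm_rpow_eq_tsum h2 f
  have hsum : Summable (fun k => ‖(shiftLM f : ∀ _ : ℕ, E) k‖ ^ ((2:ℝ≥0∞)).toReal) := by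
    have h := memℓp_shiftFun f
    rw [memℓp_gen_iff h2] at h
    exact h
  have key : ∑' k, ‖(shiftLM f : ∀ _ : ℕ, E) k‖ ^ ((2:ℝ≥0∞)).toReal
      = ∑' k, ‖(f : ∀ _ : ℕ, E) k‖ ^ ((2:ℝ≥0∞)).toReal := by
    rw [Summable.tsum_eq_zero_add hsum]
    simp [shiftLM, shiftFun]
  have : ‖shiftLM f‖ ^ ((2:ℝ≥0∞)).toReal = ‖f‖ ^ ((2:ℝ≥0∞)).toReal := by
    rw [hs, hf, key]
  rw [rpow_toReal_two, rpow_toReal_two] at this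
  have h1 : (0:ℝ) ≤ ‖shiftLM f‖ := norm_nonneg _
  have h2' : (0:ℝ) ≤ ‖f‖ := norm_nonneg _
  nlinarith [this, h1, h2']

/-- The unilateral shift `S` on `ℓ²(ℕ, E)`: `(Sf)(0) = 0`, `(Sf)(k+1) = f(k)`. -/
def shiftL : L2 E →L[ℂ] L2 E :=
  LinearMap.mkContinuous shiftLM 1 (fun f => by rw [norm_shiftLM]; simp)

@[simp] lemma shiftL_apply_zero (f : L2 E) : (shiftL f : ∀ _ : ℕ, E) 0 = 0 := rfl

@[simp] lemma shiftL_apply_succ (f : L2 E) (k : ℕ) :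
    (shiftL f : ∀ _ : ℕ, E) (k + 1) = (f : ∀ _ : ℕ, E) k := rfl

lemma memℓp_diagFun (C : E →L[ℂ] E) (f : L2 E) :
    Memℓp (fun k => C ((f : ∀ _ : ℕ, E) k)) 2 := by
  rw [memℓp_gen_iff (by norm_num)]
  have hf := summable_sq_of_mem f
  refine Summable.of_nonneg_of_le (f := fun k => ‖C‖ ^ (2:ℕ) * ‖(f : ∀ _ : ℕ, E) k‖ ^ (2:ℕ))
    (fun k => by positivity) (fun k => ?_) (hf.mul_left _)
  show ‖C ((f : ∀ _ : ℕ, E) k)‖ ^ ((2:ℝ≥0∞)).toReal ≤ ‖C‖ ^ (2:ℕ) * ‖(f : ∀ _ : ℕ, E) k‖ ^ (2:ℕ)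
  rw [rpow_toReal_two, ← mul_pow]
  exact pow_le_pow_left₀ (norm_nonneg _) (C.le_opNorm _) 2

/-- The diagonal operator `C̃` on `ℓ²(ℕ, E)`: `(C̃ f)(k) = C (f k)`. -/
def diagLM (C : E →L[ℂ] E) : L2 E →ₗ[ℂ] L2 E where
  toFun f := ⟨fun k => C ((f : ∀ _ : ℕ, E) k), memℓp_diagFun C f⟩
  map_add' f g := by ext k; simp [lp.coeFn_add, Pi.add_apply]; rfl
  map_smul' c f := by ext k; simp [lp.coeFn_smul, Pi.smul_apply]

lemma norm_diagLM (C : E →L[ℂ] E) (f : L2 E) : ‖diagLM C f‖ ≤ ‖C‖ * ‖f‖ := by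
  have h2 : (0:ℝ) < ((2 : ℝ≥0∞)).toReal := by norm_num
  have hs := lp.norm_rpow_eq_tsum h2 (diagLM C f)
  have hf := lp.norm_rpow_eq_tsum h2 f
  have hsum : Summable (fun k => ‖(diagLM C f : ∀ _ : ℕ, E) k‖ ^ ((2:ℝ≥0∞)).toReal) := by
    have h := memℓp_diagFun C f
    rw [memℓp_gen_iff h2] at h
    exact h
  have hle : ‖diagLM C f‖ ^ (2:ℕ) ≤ (‖C‖ * ‖f‖) ^ (2:ℕ) := by
    rw [← rpow_toReal_two, hs]
    calc ∑' k, ‖(diagLM C f : ∀ _ : ℕ, E) k‖ ^ ((2:ℝ≥0∞)).toReal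
        ≤ ∑' k, ‖C‖ ^ (2:ℕ) * ‖(f : ∀ _ : ℕ, E) k‖ ^ (2:ℕ) := by
          apply Summable.tsum_le_tsum _ hsum ((summable_sq_of_mem f).mul_left _)
          intro k
          show ‖(diagLM C f : ∀ _ : ℕ, E) k‖ ^ ((2:ℝ≥0∞)).toReal
            ≤ ‖C‖ ^ (2:ℕ) * ‖(f : ∀ _ : ℕ, E) k‖ ^ (2:ℕ)
          rw [rpow_toReal_two, ← mul_pow]
          exact pow_le_pow_left₀ (norm_nonneg _) (C.le_opNorm _) 2
      _ = ‖C‖ ^ (2:ℕ) * ∑' k, ‖(f : ∀ _ : ℕ, E) k‖ ^ (2:ℕ) := by rw [tsum_mul_left]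
      _ = (‖C‖ * ‖f‖) ^ (2:ℕ) := by
          rw [mul_pow]
          congr 1
          rw [← rpow_toReal_two ‖f‖, hf]
          exact (tsum_congr (fun k => by rw [rpow_toReal_two])).symm
  have := le_of_pow_le_pow_left₀ (by norm_num) (by positivity) hle
  exact this

/-- The operator `C̃` on `ℓ²(ℕ, E)` induced by `C : E →L[ℂ] E`, `(C̃ f)(k) = C (f k)`. -/
def diagL (C : E →L[ℂ] E) : L2 E →L[ℂ] L2 E :=
  LinearMap.mkContinuous (diagLM C) ‖C‖ (norm_diagLM C)

@[simp] lemma diagL_apply (C : E →L[ℂ] E) (f : L2 E) (k : ℕ) :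
    (diagL C f : ∀ _ : ℕ, E) k = C ((f : ∀ _ : ℕ, E) k) := rfl

end GammaModel
namespace GammaModel

/-- `P` is the asymptotic limit of `T*`: `P` is positive and
`⟨P²h, h⟩ = lim_k ‖T*ᵏ h‖²` for every `h`. -/
def IsAsymptoticLimit {H : Type*} [NormedAddCommGroup H] [InnerProductSpace ℂ H]
    [CompleteSpace H] (T P : H →L[ℂ] H) : Prop :=
  P.IsPositive ∧ ∀ h : H,
    Filter.Tendsto (fun k : ℕ => ‖(ContinuousLinearMap.adjoint T ^ k) h‖ ^ 2)
      Filter.atTop (nhds ((@inner ℂ H _ ((P * P) h) h).re))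

end GammaModel

open GammaModel ContinuousLinearMap

section Aux

variable {H : Type*} [NormedAddCommGroup H] [InnerProductSpace ℂ H] [CompleteSpace H]

lemma defect_norm_sq (T DT : H →L[ℂ] H) (hDTpos : DT.IsPositive)
    (hDTsq : DT * DT = 1 - T * adjoint T) (x : H) :
    ‖DT x‖ ^ 2 = ‖x‖ ^ 2 - ‖adjoint T x‖ ^ 2 := by
  have hsa : adjoint DT = DT := hDTpos.isSelfAdjoint.adjoint_eq
  have h1 : (inner ℂ ((DT * DT) x) x : ℂ) = inner ℂ (DT x) (DT x) := by
    have := adjoint_inner_left DT x (DT x)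
    rw [hsa] at this
    simpa [ContinuousLinearMap.mul_apply] using this
  have h2 : (inner ℂ ((T * adjoint T) x) x : ℂ) = inner ℂ (adjoint T x) (adjoint T x) := by
    have := adjoint_inner_left (adjoint T) x (adjoint T x)
    rw [adjoint_adjoint] at this
    simpa [ContinuousLinearMap.mul_apply] using this
  have key : (inner ℂ (DT x) (DT x) : ℂ) = inner ℂ x x - inner ℂ (adjoint T x) (adjoint T x) := by
    rw [← h1, hDTsq, ← h2]
    simp [inner_sub_left]
  have := congrArg Complex.re key
  have e1 := inner_self_eq_norm_sq (𝕜 := ℂ) (DT x)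
  have e2 := inner_self_eq_norm_sq (𝕜 := ℂ) x
  have e3 := inner_self_eq_norm_sq (𝕜 := ℂ) (adjoint T x)
  simp only [RCLike.re_to_complex] at e1 e2 e3
  rw [Complex.sub_re] at this
  linarith [e1, e2, e3]

lemma asymp_norm_sq (T P : H →L[ℂ] H) (hP : IsAsymptoticLimit T P) (h : H) :
    Filter.Tendsto (fun k : ℕ => ‖(adjoint T ^ k) h‖ ^ 2) Filter.atTop (nhds (‖P h‖ ^ 2)) := by
  have hsa : adjoint P = P := hP.1.isSelfAdjoint.adjoint_eq
  have h1 : (inner ℂ ((P * P) h) h : ℂ) = inner ℂ (P h) (P h) := by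
    have := adjoint_inner_left P h (P h)
    rw [hsa] at this
    simpa [ContinuousLinearMap.mul_apply] using this
  have e1 := inner_self_eq_norm_sq (𝕜 := ℂ) (P h)
  simp only [RCLike.re_to_complex] at e1
  have : (inner ℂ ((P * P) h) h : ℂ).re = ‖P h‖ ^ 2 := by rw [h1, e1]
  rw [← this]
  exact hP.2 h

lemma douglas_hasSum (T DT : H →L[ℂ] H) (hDTpos : DT.IsPositive)
    (hDTsq : DT * DT = 1 - T * adjoint T)
    (P : H →L[ℂ] H) (hP : IsAsymptoticLimit T P) (h : H) :
    HasSum (fun k : ℕ => ‖DT ((adjoint T ^ k) h)‖ ^ 2) (‖h‖ ^ 2 - ‖P h‖ ^ 2) := by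
  rw [hasSum_iff_tendsto_nat_of_nonneg (fun i => by positivity)]
  have hsum : ∀ n : ℕ, ∑ k ∈ Finset.range n, ‖DT ((adjoint T ^ k) h)‖ ^ 2
      = ‖h‖ ^ 2 - ‖(adjoint T ^ n) h‖ ^ 2 := by
    intro n
    have : ∀ k, ‖DT ((adjoint T ^ k) h)‖ ^ 2
        = ‖(adjoint T ^ k) h‖ ^ 2 - ‖(adjoint T ^ (k + 1)) h‖ ^ 2 := by
      intro k
      rw [defect_norm_sq T DT hDTpos hDTsq]
      congr 2
      rw [pow_succ']
      rfl
    simp only [this]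
    rw [Finset.sum_range_sub' (fun k => ‖(adjoint T ^ k) h‖ ^ 2)]
    simp
  simp only [hsum]
  exact (tendsto_const_nhds.sub (asymp_norm_sq T P hP h))

end Aux

/-- For a contraction `T` with defect operator `D_{T*}` (the positive square
root of `I − TT*`), defect space `𝒟_{T*} = closure (range D_{T*})` and asymptotic limit `P` of
`T*`: for every `h` the series `Σ_k ‖D_{T*} T*ᵏ h‖²` converges with sum `‖h‖² − ‖Ph‖²`, and
`E_D h = ((D_{T*} T*ᵏ h)_k, Ph)` defines a linear isometry `H → ℓ²(ℕ, 𝒟_{T*}) ⊕ H`. -/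
theorem douglas_embedding_isometry {H : Type*}
    [NormedAddCommGroup H] [InnerProductSpace ℂ H] [CompleteSpace H]
    (T : H →L[ℂ] H) (hT : ‖T‖ ≤ 1)
    (DT : H →L[ℂ] H) (hDTpos : DT.IsPositive)
    (hDTsq : DT * DT = 1 - T * adjoint T)
    (P : H →L[ℂ] H) (hP : IsAsymptoticLimit T P) :
    (∀ h : H, Summable (fun k : ℕ => ‖DT ((adjoint T ^ k) h)‖ ^ 2)) ∧
    (∀ h : H, ∑' k : ℕ, ‖DT ((adjoint T ^ k) h)‖ ^ 2 = ‖h‖ ^ 2 - ‖P h‖ ^ 2) ∧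
    (∃ ED : H →ₗᵢ[ℂ] WithLp 2 (L2 ↥((LinearMap.range (DT : H →ₗ[ℂ] H)).topologicalClosure) × H),
      ∀ h : H,
        (∀ k : ℕ,
          (((WithLp.equiv 2 (L2 ↥((LinearMap.range (DT : H →ₗ[ℂ] H)).topologicalClosure) × H) (ED h)).1
              : ∀ _ : ℕ, ↥((LinearMap.range (DT : H →ₗ[ℂ] H)).topologicalClosure)) k : H)
            = DT ((adjoint T ^ k) h)) ∧
        (WithLp.equiv 2 (L2 ↥((LinearMap.range (DT : H →ₗ[ℂ] H)).topologicalClosure) × H) (ED h)).2 = P h) := by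
  have hsummable : ∀ h : H, Summable (fun k : ℕ => ‖DT ((adjoint T ^ k) h)‖ ^ 2) :=
    fun h => (douglas_hasSum T DT hDTpos hDTsq P hP h).summable
  have htsum : ∀ h : H, ∑' k : ℕ, ‖DT ((adjoint T ^ k) h)‖ ^ 2 = ‖h‖ ^ 2 - ‖P h‖ ^ 2 :=
    fun h => (douglas_hasSum T DT hDTpos hDTsq P hP h).tsum_eq
  refine ⟨hsummable, htsum, ?_⟩
  have memD : ∀ x : H, DT x ∈ (LinearMap.range (DT : H →ₗ[ℂ] H)).topologicalClosure :=
    fun x => Submodule.le_topologicalClosure _ ⟨x, rfl⟩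
  set D := ((LinearMap.range (DT : H →ₗ[ℂ] H)).topologicalClosure) with hDdef
  let seqf : H → ℕ → D := fun h k => ⟨DT ((adjoint T ^ k) h), memD _⟩
  have hnormseq : ∀ (h : H) (k : ℕ), ‖seqf h k‖ = ‖DT ((adjoint T ^ k) h)‖ := fun h k => rfl
  have hmem : ∀ h : H, Memℓp (seqf h) 2 := by
    intro h
    rw [memℓp_gen_iff (by norm_num : (0:ℝ) < ((2:ℝ≥0∞)).toReal)]
    have : (fun k => ‖seqf h k‖ ^ ((2:ℝ≥0∞)).toReal)
        = fun k => ‖DT ((adjoint T ^ k) h)‖ ^ (2:ℕ) := by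
      funext k
      rw [rpow_toReal_two, hnormseq]
    rw [this]
    exact_mod_cast hsummable h
  let EDfun : H → WithLp 2 (L2 D × H) := fun h =>
    (WithLp.equiv 2 (L2 D × H)).symm (⟨seqf h, hmem h⟩, P h)
  have hnorm : ∀ h : H, ‖EDfun h‖ = ‖h‖ := by
    intro h
    have hsq := WithLp.prod_norm_sq_eq_of_L2 (EDfun h)
    have hfst : (EDfun h).fst = (⟨seqf h, hmem h⟩ : L2 D) := rfl
    have hsnd : (EDfun h).snd = P h := rfl
    have h2 : (0:ℝ) < ((2 : ℝ≥0∞)).toReal := by norm_num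
    have hlp := lp.norm_rpow_eq_tsum h2 (⟨seqf h, hmem h⟩ : L2 D)
    have hlp2 : ‖(⟨seqf h, hmem h⟩ : L2 D)‖ ^ (2:ℕ) = ‖h‖ ^ 2 - ‖P h‖ ^ 2 := by
      rw [← rpow_toReal_two, hlp, ← htsum h]
      apply tsum_congr
      intro k
      rw [rpow_toReal_two]
      norm_num [hnormseq]
    have hsq' : ‖EDfun h‖ ^ 2 = ‖h‖ ^ 2 := by
      rw [hsq, hfst, hsnd]
      have : ‖(⟨seqf h, hmem h⟩ : L2 D)‖ ^ 2 = ‖h‖ ^ 2 - ‖P h‖ ^ 2 := by exact_mod_cast hlp2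
      rw [this]; ring
    nlinarith [norm_nonneg (EDfun h), norm_nonneg h, hsq']
  let EDl : H →ₗ[ℂ] WithLp 2 (L2 D × H) :=
    { toFun := EDfun
      map_add' := by
        intro h h'
        apply (WithLp.equiv 2 (L2 D × H)).injective
        simp only [EDfun, Equiv.apply_symm_apply, WithLp.equiv_apply, WithLp.ofLp_add, WithLp.equiv_symm_apply, WithLp.ofLp_toLp, Equiv.apply_symm_apply]
        refine Prod.ext ?_ (by simp [map_add])
        ext k
        simp [seqf, map_add, Pi.add_apply]
        rfl
      map_smul' := by
        intro c h
        apply (WithLp.equiv 2 (L2 D × H)).injective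
        simp only [EDfun, Equiv.apply_symm_apply, WithLp.equiv_apply, WithLp.ofLp_smul, WithLp.equiv_symm_apply, WithLp.ofLp_toLp, Equiv.apply_symm_apply,
          RingHom.id_apply]
        refine Prod.ext ?_ (by simp [map_smul])
        ext k
        simp [seqf, map_smul, Pi.smul_apply] }
  refine ⟨⟨EDl, hnorm⟩, ?_⟩
  intro h
  constructor
  · intro k; rfl
  · rfl
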